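/- The infinite product ∏_{n=2}^∞ Erf(√(ln n)) equals zero, equivalently the series ∑_{n=2}^∞ (1 − Erf(√(ln n))) diverges. -/

import Mathlib

open MeasureTheory Real Filter

/-- The Gauss error function `Erf x = (2/√π) ∫ t in 0..x, e^{-t²}`. -/
noncomputable def Erf (x : ℝ) : ℝ :=
  (2 / Real.sqrt π) * ∫ t in (0 : ℝ)..x, Real.exp (-t ^ 2)

lemma gauss_integrable : MeasureTheory.Integrable (fun t : ℝ => Real.exp (-t ^ 2)) := by
  have := integrable_exp_neg_mul_sq (by norm_num : (0:ℝ) < 1)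
  simpa using this

lemma gauss_Ioi_zero : ∫ t in Set.Ioi (0:ℝ), Real.exp (-t ^ 2) = Real.sqrt π / 2 := by
  have := integral_gaussian_Ioi 1
  simpa using this

lemma Erf_eq_set (x : ℝ) (hx : 0 ≤ x) :
    Erf x = (2 / Real.sqrt π) * ∫ t in Set.Ioc (0:ℝ) x, Real.exp (-t ^ 2) := by
  rw [Erf, intervalIntegral.integral_of_le hx, MeasureTheory.integral_Ioc_eq_integral_Ioo,
    ← MeasureTheory.integral_Ioc_eq_integral_Ioo]

lemma two_div_sqrt_pi_pos : 0 < 2 / Real.sqrt π :=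
  div_pos two_pos (Real.sqrt_pos.mpr Real.pi_pos)

lemma one_sub_Erf (x : ℝ) (hx : 0 ≤ x) :
    1 - Erf x = (2 / Real.sqrt π) * ∫ t in Set.Ioi x, Real.exp (-t ^ 2) := by
  have hsplit : (∫ t in Set.Ioc (0:ℝ) x, Real.exp (-t ^ 2))
      + (∫ t in Set.Ioi x, Real.exp (-t ^ 2)) = Real.sqrt π / 2 := by
    rw [← gauss_Ioi_zero, ← MeasureTheory.setIntegral_union (Set.Ioc_disjoint_Ioi le_rfl)
      measurableSet_Ioi gauss_integrable.integrableOn gauss_integrable.integrableOn,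
      Set.Ioc_union_Ioi_eq_Ioi hx]
  have hπ : Real.sqrt π ≠ 0 := ne_of_gt (Real.sqrt_pos.mpr Real.pi_pos)
  have h1 : (2 / Real.sqrt π) * (Real.sqrt π / 2) = 1 := by
    field_simp
  rw [Erf_eq_set x hx]
  calc 1 - (2 / Real.sqrt π) * ∫ t in Set.Ioc (0:ℝ) x, Real.exp (-t ^ 2)
      = (2 / Real.sqrt π) * (Real.sqrt π / 2
          - ∫ t in Set.Ioc (0:ℝ) x, Real.exp (-t ^ 2)) := by rw [mul_sub, h1]
    _ = (2 / Real.sqrt π) * ∫ t in Set.Ioi x, Real.exp (-t ^ 2) := by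
        rw [← hsplit]; ring

lemma Erf_nonneg {x : ℝ} (hx : 0 ≤ x) : 0 ≤ Erf x := by
  rw [Erf_eq_set x hx]
  exact mul_nonneg two_div_sqrt_pi_pos.le
    (MeasureTheory.setIntegral_nonneg measurableSet_Ioc fun t _ => (Real.exp_pos _).le)

/-- Key lower bound: for `x ≥ 1`, `1 - Erf x ≥ (2/√π) e⁻³ e^{-x²} / x`. -/
lemma one_sub_Erf_ge {x : ℝ} (hx : 1 ≤ x) :
    (2 / Real.sqrt π) * (Real.exp (-3) * Real.exp (-x ^ 2) / x) ≤ 1 - Erf x := by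
  have hx0 : 0 < x := lt_of_lt_of_le one_pos hx
  rw [one_sub_Erf x hx0.le]
  have hsub : Set.Ioc x (x + 1/x) ⊆ Set.Ioi x := Set.Ioc_subset_Ioi_self
  have hIoc : ∀ t ∈ Set.Ioc x (x + 1/x),
      Real.exp (-3) * Real.exp (-x ^ 2) ≤ Real.exp (-t ^ 2) := by
    intro t ht
    rw [← Real.exp_add]
    apply Real.exp_le_exp.mpr
    have ht1 : x < t := ht.1
    have ht2 : t ≤ x + 1/x := ht.2
    have htpos : 0 < t := hx0.trans ht1
    have h1 : t ^ 2 ≤ (x + 1/x) ^ 2 := by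
      apply pow_le_pow_left₀ htpos.le ht2
    have h2 : (x + 1/x) ^ 2 = x ^ 2 + 2 + (1/x) ^ 2 := by
      field_simp; ring
    have h3 : (1/x) ^ 2 ≤ 1 := by
      rw [div_pow, one_pow]
      rw [div_le_one (by positivity)]
      nlinarith
    nlinarith
  have hvol : x + 1/x - x = 1/x := by ring
  have hconst : (∫ _ in Set.Ioc x (x + 1/x), Real.exp (-3) * Real.exp (-x ^ 2))
      = (1/x) * (Real.exp (-3) * Real.exp (-x ^ 2)) := by
    rw [MeasureTheory.setIntegral_const, Real.volume_real_Ioc, smul_eq_mul, hvol,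
      max_eq_left (by positivity : (0:ℝ) ≤ 1/x)]
  have step1 : (1/x) * (Real.exp (-3) * Real.exp (-x ^ 2))
      ≤ ∫ t in Set.Ioc x (x + 1/x), Real.exp (-t ^ 2) := by
    rw [← hconst]
    exact MeasureTheory.setIntegral_mono_on
      (integrableOn_const measure_Ioc_lt_top.ne)
      gauss_integrable.integrableOn measurableSet_Ioc hIoc
  have step2 : (∫ t in Set.Ioc x (x + 1/x), Real.exp (-t ^ 2))
      ≤ ∫ t in Set.Ioi x, Real.exp (-t ^ 2) := by
    apply MeasureTheory.setIntegral_mono_set gauss_integrable.integrableOn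
      (Filter.Eventually.of_forall fun t => (Real.exp_pos _).le)
      (Filter.Eventually.of_forall fun t ht => hsub ht)
  have h4 : Real.exp (-3) * Real.exp (-x ^ 2) / x
      = (1/x) * (Real.exp (-3) * Real.exp (-x ^ 2)) := by ring
  rw [h4]
  exact mul_le_mul_of_nonneg_left (step1.trans step2) two_div_sqrt_pi_pos.le

lemma Erf_mono {x y : ℝ} (hx : 0 ≤ x) (hxy : x ≤ y) : Erf x ≤ Erf y := by
  rw [Erf_eq_set x hx, Erf_eq_set y (hx.trans hxy)]
  apply mul_le_mul_of_nonneg_left _ two_div_sqrt_pi_pos.le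
  apply MeasureTheory.setIntegral_mono_set gauss_integrable.integrableOn
    (Filter.Eventually.of_forall fun t => (Real.exp_pos _).le)
    (Filter.Eventually.of_forall fun t ht => Set.Ioc_subset_Ioc_right hxy ht)

/-- The series term, shifted. -/
noncomputable def hseq (n : ℕ) : ℝ := 1 - Erf (Real.sqrt (Real.log (n + 2)))

lemma hseq_nonneg (n : ℕ) : 0 ≤ hseq n := by
  have h2 : (0:ℝ) ≤ Real.sqrt (Real.log (n + 2)) := Real.sqrt_nonneg _
  have := one_sub_Erf _ h2
  rw [hseq, this]
  exact mul_nonneg two_div_sqrt_pi_pos.le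
    (MeasureTheory.setIntegral_nonneg measurableSet_Ioi fun t _ => (Real.exp_pos _).le)

lemma hseq_anti : ∀ ⦃m n : ℕ⦄, 0 < m → m ≤ n → hseq n ≤ hseq m := by
  intro m n _ hmn
  rw [hseq, hseq]
  have hlog : Real.log (m + 2) ≤ Real.log (n + 2) := by
    apply Real.log_le_log (by positivity)
    have : (m:ℝ) ≤ n := Nat.cast_le.mpr hmn
    linarith
  have := Erf_mono (Real.sqrt_nonneg (Real.log (m + 2))) (Real.sqrt_le_sqrt hlog)
  linarith

noncomputable def Ckey : ℝ := (2 / Real.sqrt π) * Real.exp (-3) / 2 / Real.sqrt 3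

lemma Ckey_pos : 0 < Ckey :=
  div_pos (div_pos (mul_pos two_div_sqrt_pi_pos (Real.exp_pos _)) two_pos)
    (Real.sqrt_pos.mpr (by norm_num))

lemma key_bound (n : ℕ) (hn2 : 2 ≤ n) :
    Ckey * (1 / Real.sqrt n) ≤ (2:ℝ) ^ n * hseq (2 ^ n) := by
  have harg : ((2 ^ n : ℕ) : ℝ) + 2 = (2:ℝ) ^ n + 2 := by push_cast; ring
  have h4 : (4:ℝ) ≤ (2:ℝ) ^ n := by
    calc (4:ℝ) = 2 ^ 2 := by norm_num
    _ ≤ 2 ^ n := by apply pow_le_pow_right₀ (by norm_num) hn2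
  have hbase : (6:ℝ) ≤ (2:ℝ) ^ n + 2 := by linarith
  have hlog1 : 1 ≤ Real.log ((2:ℝ) ^ n + 2) := by
    have he : Real.exp 1 ≤ 6 := by
      have := Real.exp_one_lt_d9
      linarith
    rw [← Real.log_exp 1]
    exact Real.log_le_log (Real.exp_pos 1) (he.trans hbase)
  set x : ℝ := Real.sqrt (Real.log ((2:ℝ) ^ n + 2)) with hxdef
  have hx1 : 1 ≤ x := by
    rw [hxdef, show (1:ℝ) = Real.sqrt 1 by simp]
    exact Real.sqrt_le_sqrt hlog1
  have hxsq : x ^ 2 = Real.log ((2:ℝ) ^ n + 2) := by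
    rw [hxdef, Real.sq_sqrt (by linarith)]
  have hexp : Real.exp (-x ^ 2) = 1 / ((2:ℝ) ^ n + 2) := by
    rw [hxsq, Real.exp_neg, Real.exp_log (by linarith), one_div]
  have hxle : x ≤ Real.sqrt 3 * Real.sqrt n := by
    rw [hxdef, ← Real.sqrt_mul (by norm_num : (0:ℝ) ≤ 3)]
    apply Real.sqrt_le_sqrt
    have hb : (2:ℝ) ^ n + 2 ≤ (2:ℝ) ^ (n + 2) := by
      rw [pow_add]
      nlinarith
    calc Real.log ((2:ℝ) ^ n + 2) ≤ Real.log ((2:ℝ) ^ (n+2)) := by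
          apply Real.log_le_log (by positivity) hb
      _ = (n + 2) * Real.log 2 := by
          rw [Real.log_pow]; push_cast; ring
      _ ≤ (n + 2) * 1 := by
          apply mul_le_mul_of_nonneg_left _ (by positivity)
          have := Real.log_le_sub_one_of_pos (by norm_num : (0:ℝ) < 2)
          linarith
      _ ≤ 3 * n := by
          have : (2:ℝ) ≤ n := by exact_mod_cast hn2
          linarith
  have hxpos : 0 < x := lt_of_lt_of_le one_pos hx1
  have hlb := one_sub_Erf_ge hx1
  have hh : hseq (2 ^ n) = 1 - Erf x := by
    rw [hseq, hxdef, harg]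
  rw [hh]
  have hratio : (1:ℝ)/2 ≤ (2:ℝ) ^ n / ((2:ℝ) ^ n + 2) := by
    rw [div_le_div_iff₀ (by norm_num) (by positivity)]
    linarith
  have hsqrtn : 0 < Real.sqrt n := Real.sqrt_pos.mpr (by positivity)
  have hπ : (0:ℝ) < Real.sqrt π := Real.sqrt_pos.mpr Real.pi_pos
  calc Ckey * (1 / Real.sqrt n)
      = (2 / Real.sqrt π) * Real.exp (-3) * ((1:ℝ)/2) * (1 / (Real.sqrt 3 * Real.sqrt n)) := by
        rw [Ckey]
        have h3 : (0:ℝ) < Real.sqrt 3 := Real.sqrt_pos.mpr (by norm_num)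
        field_simp
    _ ≤ (2 / Real.sqrt π) * Real.exp (-3) * ((2:ℝ) ^ n / ((2:ℝ) ^ n + 2)) * (1 / x) := by
        apply mul_le_mul
        · exact mul_le_mul_of_nonneg_left hratio (by positivity)
        · exact div_le_div_of_nonneg_left one_pos.le hxpos hxle
        · positivity
        · positivity
    _ = (2:ℝ) ^ n * ((2 / Real.sqrt π) * (Real.exp (-3) * (1 / ((2:ℝ) ^ n + 2)) / x)) := by
        field_simp
    _ ≤ (2:ℝ) ^ n * (1 - Erf x) := by
        apply mul_le_mul_of_nonneg_left _ (by positivity)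
        rw [← hexp]
        exact hlb

lemma not_summable_hseq : ¬ Summable hseq := by
  intro hs
  rw [← summable_condensed_iff_of_nonneg hseq_nonneg hseq_anti] at hs
  have hshift : Summable (fun k : ℕ => (2:ℝ) ^ (k+2) * hseq (2 ^ (k+2))) :=
    (summable_nat_add_iff 2).mpr hs
  have hsum2 : Summable (fun k : ℕ => Ckey * (1 / Real.sqrt ((k:ℝ)+2))) := by
    apply Summable.of_nonneg_of_le (fun k => mul_nonneg Ckey_pos.le (by positivity)) (fun k => ?_) hshift
    have := key_bound (k+2) (by omega)
    have hc : ((k + 2 : ℕ) : ℝ) = (k:ℝ) + 2 := by push_cast; ring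
    rwa [hc] at this
  have hsum3 : Summable (fun k : ℕ => 1 / Real.sqrt ((k:ℝ)+2)) := by
    have := hsum2.mul_left Ckey⁻¹
    simpa [← mul_assoc, inv_mul_cancel₀ (ne_of_gt Ckey_pos)] using this
  have hsum4 : Summable (fun k : ℕ => 1 / Real.sqrt (k:ℝ)) := by
    rw [← summable_nat_add_iff 2]
    convert hsum3 using 2 with k
    push_cast
    case e'_5 => push_cast; rfl
    rfl
  have : ¬ Summable (fun k : ℕ => 1 / Real.sqrt (k:ℝ)) := by
    intro h
    have heq : (fun k : ℕ => 1 / Real.sqrt (k:ℝ))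
        = fun k : ℕ => 1 / (k:ℝ) ^ ((1:ℝ)/2) := by
      funext k
      rw [Real.sqrt_eq_rpow]
    rw [heq, Real.summable_one_div_nat_rpow] at h
    norm_num at h
  exact this hsum4

theorem erf_prod_eq_zero :
    Tendsto (fun N : ℕ => ∏ n ∈ Finset.Icc 2 N, Erf (Real.sqrt (Real.log n)))
        atTop (nhds 0) ∧
      ¬ Summable (fun n : ℕ => 1 - Erf (Real.sqrt (Real.log (n + 2)))) := by
  have hnsum : ¬ Summable (fun n : ℕ => 1 - Erf (Real.sqrt (Real.log (n + 2)))) := by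
    have : (fun n : ℕ => 1 - Erf (Real.sqrt (Real.log (n + 2)))) = hseq := by
      funext n; rw [hseq]
    rw [this]
    exact not_summable_hseq
  refine ⟨?_, hnsum⟩
  -- partial sums tend to infinity
  have hS : Tendsto (fun m : ℕ => ∑ i ∈ Finset.range m, hseq i) atTop atTop :=
    (not_summable_iff_tendsto_nat_atTop_of_nonneg hseq_nonneg).mp not_summable_hseq
  have hS' : Tendsto (fun N : ℕ => ∑ i ∈ Finset.range (N - 1), hseq i) atTop atTop :=
    hS.comp (tendsto_sub_atTop_nat 1)
  have hsum_eq : ∀ N : ℕ, ∑ n ∈ Finset.Icc 2 N, (1 - Erf (Real.sqrt (Real.log n)))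
      = ∑ i ∈ Finset.range (N - 1), hseq i := by
    intro N
    rw [show Finset.Icc 2 N = Finset.Ico 2 (N + 1) by rw [Finset.Ico_add_one_right_eq_Icc],
      Finset.sum_Ico_eq_sum_range]
    have : N + 1 - 2 = N - 1 := by omega
    rw [this]
    apply Finset.sum_congr rfl
    intro i _
    rw [hseq]
    congr 3
    push_cast
    ring
  -- each factor is nonneg and ≤ exp(-(1 - a))
  have hbound : ∀ N : ℕ, (∏ n ∈ Finset.Icc 2 N, Erf (Real.sqrt (Real.log n)))
      ≤ Real.exp (-(∑ i ∈ Finset.range (N - 1), hseq i)) := by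
    intro N
    calc (∏ n ∈ Finset.Icc 2 N, Erf (Real.sqrt (Real.log n)))
        ≤ ∏ n ∈ Finset.Icc 2 N, Real.exp (-(1 - Erf (Real.sqrt (Real.log n)))) := by
          apply Finset.prod_le_prod
          · intro n _
            exact Erf_nonneg (Real.sqrt_nonneg _)
          · intro n _
            have := Real.add_one_le_exp (Erf (Real.sqrt (Real.log n)) - 1)
            have heq : -(1 - Erf (Real.sqrt (Real.log n)))
                = Erf (Real.sqrt (Real.log n)) - 1 := by ring
            rw [heq]
            linarith
      _ = Real.exp (-(∑ i ∈ Finset.range (N - 1), hseq i)) := by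
          rw [← Real.exp_sum]
          congr 1
          rw [show ∑ x ∈ Finset.Icc 2 N, -(1 - Erf (Real.sqrt (Real.log x)))
              = -∑ x ∈ Finset.Icc 2 N, (1 - Erf (Real.sqrt (Real.log x))) by
            rw [Finset.sum_neg_distrib], hsum_eq N]
  have hexp0 : Tendsto (fun N : ℕ => Real.exp (-(∑ i ∈ Finset.range (N - 1), hseq i)))
      atTop (nhds 0) :=
    Real.tendsto_exp_atBot.comp (tendsto_neg_atBot_iff.mpr hS')
  apply tendsto_of_tendsto_of_tendsto_of_le_of_le tendsto_const_nhds hexp0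
    (fun N => Finset.prod_nonneg fun n _ => Erf_nonneg (Real.sqrt_nonneg _)) hbound
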